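/- For the Gaussian mechanism on ℝ: let f have ℓ₂-sensitivity Δ (i.e., |f(D₁) − f(D₂)| ≤ Δ for all adjacent D₁, D₂), let M(D) = f(D) + Z with Z ~ N(0, σ²Δ²). If σ ≥ √(2 ln(1.25/δ))/ε with 0 < ε < 1, then for all adjacent D₁, D₂ and all measurable S ⊆ ℝ: P(M(D₁) ∈ S) ≤ e^ε P(M(D₂) ∈ S) + δ. -/

import Mathlib

open MeasureTheory Real ProbabilityTheory

open Set Filter
open scoped NNReal ENNReal


lemma xexp_hasderiv (s : ℝ) (hs : 0 < s) (x : ℝ) :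
    HasDerivAt (fun y : ℝ => -s^2 * Real.exp (-y^2/(2*s^2))) (x * Real.exp (-x^2/(2*s^2))) x := by
  have h1 : HasDerivAt (fun y : ℝ => -y^2/(2*s^2)) (-x/(s^2)) x := by
    have := ((hasDerivAt_pow 2 x).neg).div_const (2*s^2)
    refine this.congr_deriv ?_
    field_simp
    ring
  have h2 := (h1.exp).const_mul (-s^2)
  refine h2.congr_deriv ?_
  field_simp

lemma xexp_tendsto (s : ℝ) (hs : 0 < s) :
    Tendsto (fun y : ℝ => -s^2 * Real.exp (-y^2/(2*s^2))) atTop (nhds 0) := by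
  have h : Tendsto (fun y : ℝ => -y^2/(2*s^2)) atTop atBot := by
    apply Tendsto.atBot_div_const (by positivity)
    exact tendsto_neg_atBot_iff.mpr (tendsto_pow_atTop (by norm_num))
  have := (Real.tendsto_exp_atBot.comp h).const_mul (-s^2)
  simpa using this

lemma xexp_integral (s b : ℝ) (hs : 0 < s) (hb : 0 < b) :
    ∫ x in Ioi b, x * Real.exp (-x^2/(2*s^2)) = s^2 * Real.exp (-b^2/(2*s^2)) := by
  have h := integral_Ioi_of_hasDerivAt_of_nonneg' (a := b)
    (g' := fun x => x * Real.exp (-x^2/(2*s^2)))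
    (fun x _ => xexp_hasderiv s hs x)
    (fun x hx => by have : (0:ℝ) < x := lt_trans hb hx; positivity) (xexp_tendsto s hs)
  rw [h]; ring

lemma xexp_integrable (s b : ℝ) (hs : 0 < s) (hb : 0 < b) :
    IntegrableOn (fun x => x * Real.exp (-x^2/(2*s^2))) (Ioi b) := by
  exact integrableOn_Ioi_deriv_of_nonneg' (fun x _ => xexp_hasderiv s hs x)
    (fun x hx => by have : (0:ℝ) < x := lt_trans hb hx; positivity) (xexp_tendsto s hs)


lemma gaussianPDFReal_eq (s : ℝ) (hs : 0 < s) (x : ℝ) :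
    gaussianPDFReal 0 ((s^2).toNNReal) x = (Real.sqrt (2*π) * s)⁻¹ * Real.exp (-x^2/(2*s^2)) := by
  rw [gaussianPDFReal]
  have hV : (((s^2).toNNReal : ℝ≥0) : ℝ) = s^2 := Real.coe_toNNReal _ (sq_nonneg s)
  rw [hV]
  have : Real.sqrt (2*π*s^2) = Real.sqrt (2*π) * s := by
    rw [Real.sqrt_mul (by positivity), Real.sqrt_sq hs.le]
  rw [this]
  norm_num

lemma gauss_tail (s b : ℝ) (hs : 0 < s) (hb : 0 < b) :
    ∫ x in Ioi b, gaussianPDFReal 0 ((s^2).toNNReal) x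
      ≤ s / (b * Real.sqrt (2*π)) * Real.exp (-b^2/(2*s^2)) := by
  have key : ∫ x in Ioi b, gaussianPDFReal 0 ((s^2).toNNReal) x
      ≤ ∫ x in Ioi b, (Real.sqrt (2*π) * s * b)⁻¹ * (x * Real.exp (-x^2/(2*s^2))) := by
    apply setIntegral_mono_on (integrable_gaussianPDFReal 0 _).integrableOn
      ((xexp_integrable s b hs hb).const_mul _) measurableSet_Ioi
    intro x hx
    rw [gaussianPDFReal_eq s hs]
    have hxb : b ≤ x := le_of_lt hx
    have h1 : (1:ℝ) ≤ x / b := (one_le_div hb).mpr hxb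
    have hsp : (0:ℝ) < Real.sqrt (2*π) := Real.sqrt_pos.mpr (by positivity)
    have : (Real.sqrt (2*π) * s * b)⁻¹ * (x * Real.exp (-x^2/(2*s^2)))
        = (Real.sqrt (2*π) * s)⁻¹ * Real.exp (-x^2/(2*s^2)) * (x/b) := by
      field_simp
    rw [this]
    nlinarith [Real.exp_pos (-x^2/(2*s^2)), mul_pos (mul_pos hsp hs) (Real.exp_pos (-x^2/(2*s^2))),
      mul_le_mul_of_nonneg_left h1 (le_of_lt (mul_pos (inv_pos.mpr (mul_pos hsp hs)) (Real.exp_pos (-x^2/(2*s^2)))))]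
  rw [integral_const_mul, xexp_integral s b hs hb] at key
  calc _ ≤ _ := key
  _ = s / (b * Real.sqrt (2*π)) * Real.exp (-b^2/(2*s^2)) := by
      have hsp : (0:ℝ) < Real.sqrt (2*π) := Real.sqrt_pos.mpr (by positivity)
      field_simp

section
variable {s : ℝ}

lemma geven (v : ℝ≥0) (x : ℝ) : gaussianPDFReal 0 v (-x) = gaussianPDFReal 0 v x := by
  simp [gaussianPDFReal, neg_sq]

lemma ghalf (hs : 0 < s) :
    ∫ x in Ioi (0:ℝ), gaussianPDFReal 0 ((s^2).toNNReal) x = 1/2 := by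
  set v := (s^2).toNNReal with hv
  have hvne : v ≠ 0 := by
    simp [hv, Real.toNNReal_eq_zero, not_le]
    positivity
  have hrefl : ∫ x in Iic (0:ℝ), gaussianPDFReal 0 v x = ∫ x in Ioi (0:ℝ), gaussianPDFReal 0 v x := by
    rw [← neg_zero, ← integral_comp_neg_Ioi]
    simp only [geven, neg_zero]
  have hsum := intervalIntegral.integral_Iic_add_Ioi (b := (0:ℝ))
    (integrable_gaussianPDFReal 0 v).integrableOn (integrable_gaussianPDFReal 0 v).integrableOn
  rw [integral_gaussianPDFReal_eq_one 0 hvne, hrefl] at hsum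
  linarith

lemma grefl (hs : 0 < s) (a : ℝ) :
    gaussianReal 0 ((s^2).toNNReal) (Iio a) = gaussianReal 0 ((s^2).toNNReal) (Ioi (-a)) := by
  set v := (s^2).toNNReal with hv
  have hvne : v ≠ 0 := by
    simp [hv, Real.toNNReal_eq_zero, not_le]; positivity
  rw [gaussianReal_apply_eq_integral _ hvne, gaussianReal_apply_eq_integral _ hvne]
  congr 1
  have h1 : ∫ x in Ioi (-a), gaussianPDFReal 0 v x = ∫ x in Ioi (-a), gaussianPDFReal 0 v (-x) := by
    simp only [geven]
  rw [h1, integral_comp_neg_Ioi, neg_neg, ← integral_Iic_eq_integral_Iio]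

lemma gtranslate_Iio (μ a : ℝ) (v : ℝ≥0) :
    gaussianReal μ v (Iio (μ + a)) = gaussianReal 0 v (Iio a) := by
  have h := gaussianReal_map_add_const (μ := 0) (v := v) μ
  rw [zero_add] at h
  rw [← h, Measure.map_apply (measurable_add_const μ) measurableSet_Iio]
  congr 1; ext x
  simp [add_comm]

lemma gtranslate_Ioi (μ a : ℝ) (v : ℝ≥0) :
    gaussianReal μ v (Ioi (μ + a)) = gaussianReal 0 v (Ioi a) := by
  have h := gaussianReal_map_add_const (μ := 0) (v := v) μ
  rw [zero_add] at h
  rw [← h, Measure.map_apply (measurable_add_const μ) measurableSet_Ioi]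
  congr 1; ext x
  simp [add_comm]

end

lemma case1_scalar (ε δ σ L : ℝ) (hε : 0 < ε) (hε1 : ε < 1) (hδ : 0 < δ)
    (hδL : δ = 5/4 * Real.exp (-L)) (hσε : Real.sqrt (2*L) ≤ σ * ε)
    (hσL : Real.sqrt (2*L) ≤ σ) (hσ0 : 0 < σ) (hL : 11/20 ≤ L) :
    Real.exp (-(σ*ε - 1/(2*σ))^2/2) ≤ δ * ((σ*ε - 1/(2*σ)) * Real.sqrt (2*π)) ∧
      0 < σ*ε - 1/(2*σ) := by
  set r := σ*ε - 1/(2*σ) with hr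
  set u := Real.sqrt (2*L) with hu
  set w := Real.sqrt (11/10) with hw
  clear_value r u w
  have hu2 : u^2 = 2*L := by rw [hu]; exact Real.sq_sqrt (by linarith)
  have hw2 : w^2 = 11/10 := by rw [hw]; exact Real.sq_sqrt (by norm_num)
  have hw0 : 0 ≤ w := by rw [hw]; exact Real.sqrt_nonneg _
  have hw1 : 1 < w := by nlinarith
  have hwu : w ≤ u := by rw [hw, hu]; exact Real.sqrt_le_sqrt (by linarith)
  have hu0 : 0 < u := lt_of_lt_of_le (by linarith) hwu
  have h2σ : 1/(2*σ) ≤ 1/(2*u) := by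
    apply one_div_le_one_div_of_le (by positivity)
    linarith
  have hru : u - 1/(2*u) ≤ r := by rw [hr]; linarith
  have h2u : 1/(2*u) ≤ 1/(2*w) := by
    apply one_div_le_one_div_of_le (by positivity)
    linarith
  have hρ : w - 1/(2*w) ≤ r := by linarith
  have hww : w * (1/(2*w)) = 1/2 := by field_simp
  have huu : u * (1/(2*u)) = 1/2 := by field_simp
  have hρpos : 0 < w - 1/(2*w) := by nlinarith
  have hrpos : (0:ℝ) < r := lt_of_lt_of_le hρpos hρ
  -- F1 : L - 1/2 ≤ r^2/2
  have hF1 : L - 1/2 ≤ r^2/2 := by nlinarith [sq_nonneg (1/(2*u)), mul_le_mul hru hru (by linarith) hrpos.le]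
  -- r^2 ≥ 18/55
  have hρ2 : (w - 1/(2*w))^2 = 18/55 := by
    have : (w - 1/(2*w))^2 = w^2 - 1 + 1/(4*w^2) := by field_simp; ring
    rw [this, hw2]; norm_num
  have hr2 : (18:ℝ)/55 ≤ r^2 := by nlinarith [mul_le_mul hρ hρ hρpos.le hrpos.le]
  have hsp : (0:ℝ) < Real.sqrt (2*π) := Real.sqrt_pos.mpr (by positivity)
  have sq2pi : (Real.sqrt (2*π))^2 = 2*π := Real.sq_sqrt (by positivity)
  -- F2 : exp(1/2) ≤ 5/4 √(2π) r
  have hF2 : Real.exp (1/2) ≤ 5/4 * Real.sqrt (2*π) * r := by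
    apply le_of_pow_le_pow_left₀ (n := 2) (by norm_num) (by positivity)
    have h1 : Real.exp (1/2) ^ 2 = Real.exp 1 := by
      rw [sq, ← Real.exp_add]; norm_num
    have h2 : (5/4 * Real.sqrt (2*π) * r)^2 = 25/16 * (2*π) * r^2 := by
      rw [mul_pow, mul_pow, sq2pi]; ring
    have h3 : 25/16 * (2*π) * r^2 = 25/8*(π*r^2) := by ring
    rw [h1, h2, h3]
    have hkey : (3.141592:ℝ)*(18/55) ≤ π * r^2 :=
      mul_le_mul Real.pi_gt_d6.le hr2 (by norm_num) Real.pi_pos.le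
    linarith [hkey, Real.exp_one_lt_d9]
  constructor
  · have key : Real.exp (L - r^2/2) ≤ 5/4 * Real.sqrt (2*π) * r :=
      le_trans (Real.exp_le_exp.mpr (by linarith)) hF2
    have hexp : Real.exp (-r^2/2) = Real.exp (L - r^2/2) * Real.exp (-L) := by
      rw [← Real.exp_add]; congr 1; ring
    rw [hexp, hδL]
    have hel : 0 < Real.exp (-L) := Real.exp_pos _
    have h5 := mul_le_mul_of_nonneg_right key hel.le
    refine le_trans h5 (le_of_eq (by ring))
  · exact hrpos

lemma gVne {s : ℝ} (hs : 0 < s) : ((s^2).toNNReal) ≠ 0 := by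
  simp [Real.toNNReal_eq_zero, not_le]; positivity

set_option maxHeartbeats 1000000 in
lemma tail_main (ε δ σ Δ : ℝ) (hε : 0 < ε) (hε1 : ε < 1) (hδ : 0 < δ) (hδ1 : δ < 1)
    (hΔ : 0 < Δ) (hσ : Real.sqrt (2 * Real.log (1.25/δ)) / ε ≤ σ) :
    gaussianReal 0 (((σ*Δ)^2).toNNReal) (Ioi ((σ*Δ)^2*ε/Δ - Δ/2)) ≤ ENNReal.ofReal δ := by
  set L := Real.log (1.25/δ) with hLdef
  have h15 : (1/5 : ℝ) ≤ Real.log (5/4) := by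
    rw [Real.le_log_iff_exp_le (by norm_num)]
    have h := Real.add_one_le_exp (-(1/5) : ℝ)
    have h2 : (4/5 : ℝ) ≤ Real.exp (-(1/5)) := by linarith
    rw [Real.exp_neg] at h2
    have h3 : (0:ℝ) < Real.exp (1/5) := Real.exp_pos _
    rw [le_inv_comm₀ (by norm_num) h3] at h2
    linarith [h2]
  have hL54 : Real.log (5/4) ≤ L := by
    rw [hLdef]
    have : (5/4 : ℝ) ≤ 1.25/δ := by
      rw [show (1.25:ℝ) = 5/4 by norm_num]
      rw [le_div_iff₀ hδ]
      nlinarith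
    exact Real.log_le_log (by norm_num) this
  have hL5 : (1/5 : ℝ) ≤ L := le_trans h15 hL54
  have hδL : δ = 5/4 * Real.exp (-L) := by
    have h1 : -L = Real.log (δ/1.25) := by
      rw [hLdef, ← Real.log_inv]
      congr 1
      rw [inv_div]
    rw [h1, Real.exp_log (by positivity)]
    norm_num
    field_simp
  have hL0 : (0:ℝ) < L := lt_of_lt_of_le (by norm_num) hL5
  have hσ0 : 0 < σ := by
    have h0 : (0:ℝ) < Real.sqrt (2*L) := Real.sqrt_pos.mpr (by linarith)
    have : (0:ℝ) < Real.sqrt (2*L)/ε := div_pos h0 hε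
    linarith
  have hσε : Real.sqrt (2*L) ≤ σ * ε := by
    rw [← div_le_iff₀ hε] at *
    · exact hσ
  have hσL : Real.sqrt (2*L) ≤ σ := by
    have h1 : Real.sqrt (2*L) ≤ Real.sqrt (2*L)/ε := by
      rw [le_div_iff₀ hε]
      nlinarith [Real.sqrt_nonneg (2*L)]
    linarith
  have hs : 0 < σ*Δ := mul_pos hσ0 hΔ
  set s := σ*Δ with hsdef
  set b := s^2*ε/Δ - Δ/2 with hbdef
  have hbΔ : b = Δ*(σ^2*ε - 1/2) := by
    rw [hbdef, hsdef]
    field_simp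
  clear_value L s b
  have hσε2 : 2*L ≤ σ^2*ε := by
    have h1 := mul_le_mul hσε hσε (Real.sqrt_nonneg _) (by positivity)
    rw [Real.mul_self_sqrt (by linarith)] at h1
    nlinarith [sq_nonneg σ]
  have hVne := gVne hs
  by_cases hcase : 11/20 ≤ L
  · -- Case 1
    obtain ⟨hkey, hrpos⟩ := case1_scalar ε δ σ L hε hε1 hδ hδL hσε hσL hσ0 hcase
    set r := σ*ε - 1/(2*σ) with hrdef
    have hbr : b = r*s := by
      rw [hbΔ, hrdef, hsdef]
      field_simp
    have hbpos : 0 < b := by rw [hbr]; positivity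
    rw [gaussianReal_apply_eq_integral _ hVne]
    refine le_trans (ENNReal.ofReal_le_ofReal (gauss_tail s b hs hbpos)) (ENNReal.ofReal_le_ofReal ?_)
    have hsp : (0:ℝ) < Real.sqrt (2*π) := Real.sqrt_pos.mpr (by positivity)
    have h1 : -b^2/(2*s^2) = -r^2/2 := by
      rw [hbr]; field_simp
    have h2 : s/(b*Real.sqrt (2*π)) = 1/(r*Real.sqrt (2*π)) := by
      rw [hbr]; field_simp
    rw [h1, h2]
    have h3 : (0:ℝ) < r * Real.sqrt (2*π) := by positivity
    rw [div_mul_eq_mul_div, one_mul, div_le_iff₀ h3]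
    linarith [hkey]
  · -- Case 2 : L < 11/20
    push_neg at hcase
    have hexpL := Real.add_one_le_exp (-L)
    have hδhalf : (1/2:ℝ) ≤ δ := by linarith
    by_cases hb0 : 0 ≤ b
    · refine le_trans (measure_mono (Ioi_subset_Ioi hb0)) ?_
      rw [gaussianReal_apply_eq_integral _ hVne, ghalf hs]
      exact ENNReal.ofReal_le_ofReal (by linarith)
    · push_neg at hb0
      have hσεhalf : σ^2*ε < 1/2 := by
        by_contra hcon
        push_neg at hcon
        have h2 : 0 ≤ Δ*(σ^2*ε - 1/2) := mul_nonneg hΔ.le (by linarith)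
        rw [← hbΔ] at h2
        linarith
      have hL4 : L < 1/4 := by linarith
      have hδ15 : (15/16:ℝ) ≤ δ := by linarith
      have hsplit : Ioi b ⊆ Ioc b 0 ∪ Ioi (0:ℝ) := by
        rw [Ioc_union_Ioi_eq_Ioi hb0.le]
      refine le_trans (le_trans (measure_mono hsplit) (measure_union_le _ _)) ?_
      have hsp : (0:ℝ) < Real.sqrt (2*π) := Real.sqrt_pos.mpr (by positivity)
      have hIoc : gaussianReal 0 ((s^2).toNNReal) (Ioc b 0)
          ≤ ENNReal.ofReal ((Real.sqrt (2*π) * s)⁻¹ * (-b)) := by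
        rw [gaussianReal_apply_eq_integral _ hVne]
        apply ENNReal.ofReal_le_ofReal
        have hmono : ∫ x in Ioc b 0, gaussianPDFReal 0 ((s^2).toNNReal) x
            ≤ ∫ x in Ioc b 0, (Real.sqrt (2*π) * s)⁻¹ := by
          apply setIntegral_mono_on (integrable_gaussianPDFReal 0 _).integrableOn
            (integrableOn_const (by rw [Real.volume_Ioc]; exact ENNReal.ofReal_ne_top))
            measurableSet_Ioc
          intro x _
          rw [gaussianPDFReal_eq s hs]
          have : Real.exp (-x^2/(2*s^2)) ≤ 1 := Real.exp_le_one_iff.mpr (by rw [neg_div]; exact neg_nonpos.mpr (by positivity))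
          nlinarith [inv_pos.mpr (mul_pos hsp hs)]
        rw [setIntegral_const, measureReal_def, Real.volume_Ioc, smul_eq_mul,
          ENNReal.toReal_ofReal (by linarith)] at hmono
        calc _ ≤ _ := hmono
        _ = (Real.sqrt (2*π) * s)⁻¹ * (-b) := by ring
      have hIoi : gaussianReal 0 ((s^2).toNNReal) (Ioi (0:ℝ)) ≤ ENNReal.ofReal (1/2) := by
        rw [gaussianReal_apply_eq_integral _ hVne, ghalf hs]
      refine le_trans (add_le_add hIoc hIoi) ?_
      rw [← ENNReal.ofReal_add (mul_nonneg (inv_nonneg.mpr (mul_nonneg hsp.le hs.le)) (neg_nonneg.mpr hb0.le)) (by norm_num)]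
      apply ENNReal.ofReal_le_ofReal
      -- scalar: (√(2π) s)⁻¹ * (-b) + 1/2 ≤ δ
      have hsqrt25 : Real.sqrt (2/5) ≤ σ := by
        refine le_trans ?_ hσL
        exact Real.sqrt_le_sqrt (by linarith)
      have h87 : (8:ℝ)/7 ≤ Real.sqrt (2*π) * σ := by
        have h1 : (8:ℝ)/7 ≤ Real.sqrt (2*π) * Real.sqrt (2/5) := by
          rw [← Real.sqrt_mul (by positivity)]
          rw [Real.le_sqrt (by norm_num) (by positivity)]
          nlinarith [Real.pi_gt_d6]
        refine le_trans h1 ?_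
        exact mul_le_mul_of_nonneg_left hsqrt25 hsp.le
      have hbval : (Real.sqrt (2*π) * s)⁻¹ * (-b) = (1/2 - σ^2*ε)/(Real.sqrt (2*π)*σ) := by
        rw [hbΔ, hsdef]
        field_simp
        ring
      rw [hbval]
      have h4 : (1/2 - σ^2*ε)/(Real.sqrt (2*π)*σ) ≤ (1/2)/(8/7 : ℝ) := by
        apply div_le_div₀ (by norm_num) (by nlinarith [sq_nonneg σ]) (by norm_num) h87
      have h5 : ((1:ℝ)/2)/(8/7 : ℝ) = 7/16 := by norm_num
      linarith [h4, h5.le]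

lemma pdf_ratio {s μ₁ μ₂ ε x : ℝ} (hs : 0 < s) (hε : 0 ≤ ε)
    (h : (x-μ₂)^2 - (x-μ₁)^2 ≤ 2*s^2*ε) :
    gaussianPDFReal μ₁ ((s^2).toNNReal) x ≤ Real.exp ε * gaussianPDFReal μ₂ ((s^2).toNNReal) x := by
  have hVc : (((s^2).toNNReal : ℝ≥0) : ℝ) = s^2 := Real.coe_toNNReal _ (sq_nonneg s)
  rw [gaussianPDFReal, gaussianPDFReal, hVc]
  have h2s : (0:ℝ) < 2*s^2 := by positivity
  have hsub : ((x-μ₂)^2 - (x-μ₁)^2)/(2*s^2) ≤ ε := (div_le_iff₀ h2s).mpr (by linarith)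
  have hdists : ((x-μ₂)^2 - (x-μ₁)^2)/(2*s^2) = (x-μ₂)^2/(2*s^2) - (x-μ₁)^2/(2*s^2) :=
    sub_div _ _ _
  have harg : -(x-μ₁)^2/(2*s^2) ≤ ε + -(x-μ₂)^2/(2*s^2) := by
    rw [neg_div, neg_div]
    linarith [hdists ▸ hsub]
  calc (Real.sqrt (2*π*s^2))⁻¹ * Real.exp (-(x-μ₁)^2/(2*s^2))
      ≤ (Real.sqrt (2*π*s^2))⁻¹ * Real.exp (ε + -(x-μ₂)^2/(2*s^2)) :=
        mul_le_mul_of_nonneg_left (Real.exp_le_exp.mpr harg) (by positivity)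
    _ = Real.exp ε * ((Real.sqrt (2*π*s^2))⁻¹ * Real.exp (-(x-μ₂)^2/(2*s^2))) := by
        rw [Real.exp_add]; ring


set_option maxHeartbeats 1000000 in
/-- Privacy of the Gaussian mechanism on ℝ: if `f` has sensitivity `Δ` over an adjacency
relation and `M(D) = f(D) + Z` with `Z ~ N(0, σ²Δ²)` where
`σ ≥ √(2 ln(1.25/δ))/ε` and `0 < ε < 1`, then `M` is `(ε, δ)`-differentially private,
i.e. `P(M(D₁) ∈ S) ≤ e^ε P(M(D₂) ∈ S) + δ` for all adjacent `D₁, D₂` and measurable `S`.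
Here the law of `M(D)` is the Gaussian measure `N(f(D), (σΔ)²)`. -/
theorem gaussian_mechanism_dp
    {Dataset : Type*} (Adj : Dataset → Dataset → Prop)
    (f : Dataset → ℝ) (Δ : ℝ) (hΔ : 0 < Δ)
    (hsens : ∀ D₁ D₂, Adj D₁ D₂ → |f D₁ - f D₂| ≤ Δ)
    (ε δ σ : ℝ) (hε : 0 < ε) (hε1 : ε < 1) (hδ : 0 < δ) (hδ1 : δ < 1)
    (hσ : σ ≥ Real.sqrt (2 * Real.log (1.25 / δ)) / ε) :
    ∀ D₁ D₂, Adj D₁ D₂ → ∀ S : Set ℝ, MeasurableSet S →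
      gaussianReal (f D₁) ((σ * Δ) ^ 2).toNNReal S
        ≤ ENNReal.ofReal (Real.exp ε) * gaussianReal (f D₂) ((σ * Δ) ^ 2).toNNReal S
          + ENNReal.ofReal δ := by
  intro D₁ D₂ hadj S hS
  -- basic positivity
  have hL0 : (0:ℝ) < Real.log (1.25/δ) := by
    apply Real.log_pos
    rw [lt_div_iff₀ hδ]
    linarith
  have hσ0 : 0 < σ := by
    have h0 : (0:ℝ) < Real.sqrt (2 * Real.log (1.25/δ)) := Real.sqrt_pos.mpr (by linarith)
    have : (0:ℝ) < Real.sqrt (2 * Real.log (1.25/δ))/ε := div_pos h0 hε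
    linarith
  have hs : 0 < σ * Δ := mul_pos hσ0 hΔ
  set μ₁ := f D₁ with hμ₁
  set μ₂ := f D₂ with hμ₂
  set s := σ * Δ with hsdef
  have hVne := gVne hs
  set c := μ₂ - μ₁ with hcdef
  have hcabs : |c| ≤ Δ := by
    rw [hcdef, abs_sub_comm]
    exact hsens D₁ D₂ hadj
  have h2s : (0:ℝ) < 2 * s^2 := by positivity
  set B := {x : ℝ | 2*s^2*ε < (x - μ₂)^2 - (x - μ₁)^2} with hBdef
  clear_value B c s μ₁ μ₂
  have hBmeas : MeasurableSet B := by
    rw [hBdef]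
    apply measurableSet_lt measurable_const
    exact ((measurable_id.sub_const μ₂).pow_const 2).sub ((measurable_id.sub_const μ₁).pow_const 2)
  -- step 1 : split
  have step1 : gaussianReal μ₁ ((s^2).toNNReal) S
      ≤ gaussianReal μ₁ ((s^2).toNNReal) (S ∩ Bᶜ) + gaussianReal μ₁ ((s^2).toNNReal) B := by
    refine le_trans (measure_mono ?_) (measure_union_le _ _)
    intro x hx
    by_cases hxB : x ∈ B
    · exact Or.inr hxB
    · exact Or.inl ⟨hx, hxB⟩
  -- step 2
  have step2 : gaussianReal μ₁ ((s^2).toNNReal) (S ∩ Bᶜ)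
      ≤ ENNReal.ofReal (Real.exp ε) * gaussianReal μ₂ ((s^2).toNNReal) S := by
    rw [gaussianReal_apply _ hVne, gaussianReal_apply _ hVne]
    have hmono : ∫⁻ x in S ∩ Bᶜ, gaussianPDF μ₁ ((s^2).toNNReal) x
        ≤ ∫⁻ x in S ∩ Bᶜ, ENNReal.ofReal (Real.exp ε) * gaussianPDF μ₂ ((s^2).toNNReal) x := by
      apply setLIntegral_mono (measurable_const.mul (measurable_gaussianPDF _ _))
      intro x hx
      have hxB' : x ∈ Bᶜ := hx.2
      rw [hBdef] at hxB'
      have hxB : (x - μ₂)^2 - (x - μ₁)^2 ≤ 2*s^2*ε := by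
        simpa [not_lt] using hxB'
      simp only [gaussianPDF, Pi.mul_apply]
      rw [← ENNReal.ofReal_mul (Real.exp_nonneg ε)]
      exact ENNReal.ofReal_le_ofReal (pdf_ratio hs hε.le hxB)
    refine le_trans hmono ?_
    rw [lintegral_const_mul _ (measurable_gaussianPDF _ _)]
    exact mul_le_mul_right (lintegral_mono_set (inter_subset_left)) _
  -- step 3 : bad set
  set b := s^2*ε/Δ - Δ/2 with hbdef
  have hbmul : b*Δ = s^2*ε - Δ^2/2 := by rw [hbdef]; field_simp
  clear_value b
  have hident : ∀ x : ℝ, (x - μ₂)^2 - (x - μ₁)^2 = c^2 - 2*c*(x - μ₁) := by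
    intro x; rw [hcdef]; ring
  have htail := tail_main ε δ σ Δ hε hε1 hδ hδ1 hΔ hσ
  rw [← hsdef, ← hbdef] at htail
  have step3 : gaussianReal μ₁ ((s^2).toNNReal) B ≤ ENNReal.ofReal δ := by
    rcases lt_trichotomy c 0 with hc0 | hc0 | hc0
    · -- c < 0 : B ⊆ Ioi (μ₁ + b)
      have hsub : B ⊆ Ioi (μ₁ + b) := by
        intro x hx
        rw [hBdef, mem_setOf_eq, hident x] at hx
        rw [mem_Ioi]
        by_contra hcon
        push_neg at hcon
        have hcΔ : -c ≤ Δ := by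
          have := (abs_le.mp hcabs).1
          linarith
        have hint1 : 0 ≤ (-2*c) * ((μ₁ + b) - x) := by
          apply mul_nonneg (by linarith) (by linarith)
        have hint3 : 0 ≤ (Δ + c) * (2*s^2*ε - c*Δ) := by
          apply mul_nonneg (by linarith [neg_le.mp ((abs_le.mp hcabs).1)])
          nlinarith [mul_pos (mul_pos two_pos (pow_pos hs 2)) hε, mul_neg_of_neg_of_pos hc0 hΔ]
        have hbc : -2*c*(b*Δ) = -2*c*(s^2*ε - Δ^2/2) := by rw [hbmul]
        have hint1Δ : 0 ≤ (-2*c*Δ) * ((μ₁ + b) - x) :=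
          mul_nonneg (mul_nonneg (by linarith) hΔ.le) (by linarith)
        have hxΔ := mul_lt_mul_of_pos_left hx hΔ
        nlinarith [hxΔ, hint1Δ, hint3, hbc]
      refine le_trans (measure_mono hsub) ?_
      rw [gtranslate_Ioi μ₁ b]
      exact htail
    · -- c = 0 : B = ∅
      have hsub : B ⊆ (∅ : Set ℝ) := by
        intro x hx
        rw [hBdef, mem_setOf_eq, hident x, hc0] at hx
        norm_num at hx
        nlinarith [hx, h2s, hε]
      refine le_trans (measure_mono hsub) ?_
      simp
    · -- c > 0 : B ⊆ Iio (μ₁ - b)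
      have hsub : B ⊆ Iio (μ₁ - b) := by
        intro x hx
        rw [hBdef, mem_setOf_eq, hident x] at hx
        rw [mem_Iio]
        by_contra hcon
        push_neg at hcon
        have hcΔ : c ≤ Δ := (abs_le.mp hcabs).2
        have hint1 : 0 ≤ (2*c) * (x - (μ₁ - b)) := by
          apply mul_nonneg (by linarith) (by linarith)
        have hint3 : 0 ≤ (Δ - c) * (2*s^2*ε + c*Δ) := by
          apply mul_nonneg (by linarith)
          nlinarith [mul_pos (mul_pos two_pos (pow_pos hs 2)) hε, mul_pos hc0 hΔ]
        have hbc : 2*c*(b*Δ) = 2*c*(s^2*ε - Δ^2/2) := by rw [hbmul]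
        have hint1Δ : 0 ≤ (2*c*Δ) * (x - (μ₁ - b)) :=
          mul_nonneg (mul_nonneg (by linarith) hΔ.le) (by linarith)
        have hxΔ := mul_lt_mul_of_pos_left hx hΔ
        nlinarith [hxΔ, hint1Δ, hint3, hbc]
      refine le_trans (measure_mono hsub) ?_
      have heq : μ₁ - b = μ₁ + (-b) := by ring
      rw [heq, gtranslate_Iio μ₁ (-b), grefl hs, neg_neg]
      exact htail
  calc gaussianReal μ₁ ((s^2).toNNReal) S
      ≤ gaussianReal μ₁ ((s^2).toNNReal) (S ∩ Bᶜ) + gaussianReal μ₁ ((s^2).toNNReal) B := step1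
    _ ≤ ENNReal.ofReal (Real.exp ε) * gaussianReal μ₂ ((s^2).toNNReal) S + ENNReal.ofReal δ :=
        add_le_add step2 step3
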